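/- Let n, m ≥ 1 and ε ≥ 0. Let L_c, L_s, L_c', L_s' be real symmetric positive semidefinite n×n matrices annihilating the all-ones vector, such that both pairs (L_c, L_c') and (L_s, L_s') satisfy (1/(1+ε))·zᵀL_c z ≤ zᵀL_c' z ≤ (1+ε)·zᵀL_c z and (1/(1+ε))·zᵀL_s z ≤ zᵀL_s' z ≤ (1+ε)·zᵀL_s z for all z ∈ ℝⁿ. Set L = L_c − i·L_s and L' = L_c' − i·L_s'. Let ℰ and ℱ be mn×mn real diagonal matrices, set V = ℰ + i·ℱ, let 𝓛 (resp. 𝓛', 𝓛_c, 𝓛_s) be the mn×mn block-diagonal matrix with m diagonal copies of L (resp. L', L_c, L_s), let 𝒮 ∈ ℂ^{mn} be arbitrary and 𝟙 ∈ ℝ^{mn} the all-ones vector. Define Δ = sqrt( ( √(mn)·(‖ℰ𝓛_cℰ‖ + ‖ℱ𝓛_cℱ‖) + ‖𝓛_s‖·(‖ℰ‖·‖ℱ𝟙‖ + ‖ℱ‖·‖ℰ𝟙‖) )² + ( √(mn)·(‖ℰ𝓛_sℰ‖ + ‖ℱ𝓛_sℱ‖) + ‖𝓛_c‖·(‖ℱ‖·‖ℰ𝟙‖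 + ‖ℰ‖·‖ℱ𝟙‖) )² ). Then (1/√(2mn))·‖V·conj(𝓛')·conj(V)·𝟙 − 𝒮‖ ≤ (1/√(2mn))·‖V·conj(𝓛)·conj(V)·𝟙 − 𝒮‖ + ε·Δ/√(2mn), where conj denotes entrywise complex conjugation, ‖·‖ is the Euclidean norm on vectors in ℂ^{mn} and the operator 2-norm on matrices. -/

import Mathlib

open Matrix
open scoped Matrix.Norms.L2Operator

/-- The Euclidean norm of a real vector. -/
noncomputable def vnorm {ι : Type*} [Fintype ι] (v : ι → ℝ) : ℝ :=
  Real.sqrt (∑ i, v i ^ 2)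

/-- The Euclidean norm of a complex vector. -/
noncomputable def cvnorm {ι : Type*} [Fintype ι] (v : ι → ℂ) : ℝ :=
  Real.sqrt (∑ i, ‖v i‖ ^ 2)

namespace ACAux

def castC {ι : Type*} (v : ι → ℝ) : ι → ℂ := fun i => (v i : ℂ)

section Basic
variable {ι : Type*} [Fintype ι]

lemma vnorm_eq (v : ι → ℝ) : vnorm v = ‖(WithLp.equiv 2 (ι → ℝ)).symm v‖ := by
  rw [EuclideanSpace.norm_eq, vnorm]
  congr 1; apply Finset.sum_congr rfl; intro i _
  simp [Real.norm_eq_abs, sq_abs]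

lemma cvnorm_eq (v : ι → ℂ) : cvnorm v = ‖(WithLp.equiv 2 (ι → ℂ)).symm v‖ := by
  rw [EuclideanSpace.norm_eq, cvnorm]; rfl

lemma vnorm_nonneg (v : ι → ℝ) : 0 ≤ vnorm v := Real.sqrt_nonneg _

lemma cvnorm_nonneg (v : ι → ℂ) : 0 ≤ cvnorm v := Real.sqrt_nonneg _

lemma vnorm_sq (v : ι → ℝ) : vnorm v ^ 2 = ∑ i, v i ^ 2 :=
  Real.sq_sqrt (Finset.sum_nonneg fun i _ => sq_nonneg _)

lemma cvnorm_add_le (u v : ι → ℂ) : cvnorm (u + v) ≤ cvnorm u + cvnorm v := by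
  rw [cvnorm_eq, cvnorm_eq, cvnorm_eq]
  have h : (WithLp.equiv 2 (ι → ℂ)).symm (u + v)
      = (WithLp.equiv 2 (ι → ℂ)).symm u + (WithLp.equiv 2 (ι → ℂ)).symm v := rfl
  rw [h]; exact norm_add_le _ _

lemma vnorm_add_le (u v : ι → ℝ) : vnorm (u + v) ≤ vnorm u + vnorm v := by
  rw [vnorm_eq, vnorm_eq, vnorm_eq]
  have h : (WithLp.equiv 2 (ι → ℝ)).symm (u + v)
      = (WithLp.equiv 2 (ι → ℝ)).symm u + (WithLp.equiv 2 (ι → ℝ)).symm v := rfl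
  rw [h]; exact norm_add_le _ _

lemma vnorm_sub_le (u v : ι → ℝ) : vnorm (u - v) ≤ vnorm u + vnorm v := by
  have h : u - v = u + (-v) := by ring
  rw [h]
  refine (vnorm_add_le u (-v)).trans ?_
  have : vnorm (-v) = vnorm v := by unfold vnorm; congr 1; apply Finset.sum_congr rfl; intro i _; simp
  rw [this]

lemma vnorm_mulVec_le [DecidableEq ι] (A : Matrix ι ι ℝ) (v : ι → ℝ) :
    vnorm (A *ᵥ v) ≤ ‖A‖ * vnorm v := by
  rw [vnorm_eq, vnorm_eq]
  exact A.l2_opNorm_mulVec ((WithLp.equiv 2 (ι → ℝ)).symm v)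

lemma opNorm_le_of_mulVec [DecidableEq ι] (A : Matrix ι ι ℝ) (c : ℝ) (hc : 0 ≤ c)
    (h : ∀ v : ι → ℝ, vnorm (A *ᵥ v) ≤ c * vnorm v) : ‖A‖ ≤ c := by
  rw [Matrix.l2_opNorm_def]
  apply ContinuousLinearMap.opNorm_le_bound _ hc
  intro x
  have h2 := h ((WithLp.equiv 2 (ι → ℝ)) x)
  rw [vnorm_eq, vnorm_eq] at h2
  simpa [Matrix.toEuclideanLin_apply] using h2

lemma abs_dotProduct_le (x y : ι → ℝ) : |x ⬝ᵥ y| ≤ vnorm x * vnorm y := by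
  rw [vnorm_eq, vnorm_eq]
  have h := abs_real_inner_le_norm ((WithLp.equiv 2 (ι → ℝ)).symm x) ((WithLp.equiv 2 (ι → ℝ)).symm y)
  have h2 : (inner ℝ ((WithLp.equiv 2 (ι → ℝ)).symm x) ((WithLp.equiv 2 (ι → ℝ)).symm y) : ℝ) = x ⬝ᵥ y := by
    simp [EuclideanSpace.inner_eq_star_dotProduct, dotProduct, mul_comm]
  rwa [h2] at h

lemma vnorm_zero_imp {v : ι → ℝ} (h : vnorm v = 0) : v = 0 := by
  have h2 : ∑ i, v i ^ 2 = 0 := by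
    have := vnorm_sq v; rw [h] at this; simpa using this.symm
  funext i
  have := (Finset.sum_eq_zero_iff_of_nonneg (fun i _ => sq_nonneg (v i))).mp h2 i (Finset.mem_univ i)
  exact pow_eq_zero_iff (by norm_num) |>.mp this

lemma vnorm_smul (c : ℝ) (v : ι → ℝ) : vnorm (c • v) = |c| * vnorm v := by
  unfold vnorm
  rw [← Real.sqrt_sq_eq_abs, ← Real.sqrt_mul (sq_nonneg c), Finset.mul_sum]
  congr 1; apply Finset.sum_congr rfl; intro i _; simp [mul_pow]

lemma sym_dot {A : Matrix ι ι ℝ} (hA : Aᵀ = A) (x y : ι → ℝ) :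
    x ⬝ᵥ A *ᵥ y = y ⬝ᵥ A *ᵥ x := by
  rw [dotProduct_mulVec, ← Matrix.mulVec_transpose, hA, dotProduct_comm]

lemma dot_self_mulVec {A : Matrix ι ι ℝ} (hA : Aᵀ = A) (x u : ι → ℝ) :
    x ⬝ᵥ A *ᵥ u = (A *ᵥ x) ⬝ᵥ u := by
  rw [dotProduct_mulVec, ← Matrix.mulVec_transpose, hA]

lemma parallelogram (x y : ι → ℝ) :
    vnorm (x + y) ^ 2 + vnorm (x - y) ^ 2 = 2 * vnorm x ^ 2 + 2 * vnorm y ^ 2 := by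
  simp only [vnorm_sq]
  rw [← Finset.sum_add_distrib]
  rw [Finset.mul_sum, Finset.mul_sum, ← Finset.sum_add_distrib]
  apply Finset.sum_congr rfl; intro i _
  simp only [Pi.add_apply, Pi.sub_apply]; ring

lemma polarization {A : Matrix ι ι ℝ} (hA : Aᵀ = A) (x y : ι → ℝ) :
    (x + y) ⬝ᵥ A *ᵥ (x + y) - (x - y) ⬝ᵥ A *ᵥ (x - y) = 4 * (x ⬝ᵥ A *ᵥ y) := by
  have h := sym_dot hA x y
  simp only [Matrix.mulVec_add, Matrix.mulVec_sub, dotProduct_add, dotProduct_sub,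
    add_dotProduct, sub_dotProduct]
  linarith [h]

lemma bilin_bound {A : Matrix ι ι ℝ} (hA : Aᵀ = A) {c : ℝ} (hc : 0 ≤ c)
    (h : ∀ z, |z ⬝ᵥ A *ᵥ z| ≤ c * vnorm z ^ 2) (x y : ι → ℝ) :
    |x ⬝ᵥ A *ᵥ y| ≤ c * vnorm x * vnorm y := by
  have half : ∀ u v : ι → ℝ, |u ⬝ᵥ A *ᵥ v| ≤ c / 2 * (vnorm u ^ 2 + vnorm v ^ 2) := by
    intro u v
    have hp := polarization hA u v
    have h1 := h (u + v)
    have h2 := h (u - v)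
    have hpar := parallelogram u v
    have habs : |4 * (u ⬝ᵥ A *ᵥ v)| ≤ c * vnorm (u+v) ^ 2 + c * vnorm (u-v) ^ 2 := by
      rw [← hp]
      calc |(u + v) ⬝ᵥ A *ᵥ (u + v) - (u - v) ⬝ᵥ A *ᵥ (u - v)|
          ≤ |(u + v) ⬝ᵥ A *ᵥ (u + v)| + |(u - v) ⬝ᵥ A *ᵥ (u - v)| := abs_sub _ _
        _ ≤ c * vnorm (u+v) ^ 2 + c * vnorm (u-v) ^ 2 := add_le_add h1 h2
    rw [abs_mul, abs_of_nonneg (by norm_num : (0:ℝ) ≤ 4)] at habs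
    nlinarith [habs, hpar]
  rcases eq_or_lt_of_le (mul_nonneg (vnorm_nonneg x) (vnorm_nonneg y)) with hP | hP
  · have h0 : vnorm x = 0 ∨ vnorm y = 0 := mul_eq_zero.mp hP.symm
    rcases h0 with h0 | h0
    · have hx : x = 0 := vnorm_zero_imp h0
      rw [hx, zero_dotProduct, abs_zero]
      exact mul_nonneg (mul_nonneg hc (vnorm_nonneg _)) (vnorm_nonneg y)
    · have hy : y = 0 := vnorm_zero_imp h0
      rw [hy, Matrix.mulVec_zero, dotProduct_zero, abs_zero]
      exact mul_nonneg (mul_nonneg hc (vnorm_nonneg x)) (vnorm_nonneg _)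
  · have key := half (vnorm y • x) (vnorm x • y)
    rw [smul_dotProduct, Matrix.mulVec_smul, dotProduct_smul, smul_eq_mul, smul_eq_mul,
      vnorm_smul, vnorm_smul, abs_mul, abs_of_nonneg (vnorm_nonneg y),
      abs_of_nonneg (vnorm_nonneg x), abs_mul, abs_of_nonneg (vnorm_nonneg x)] at key
    have key2 : (vnorm x * vnorm y) * |x ⬝ᵥ A *ᵥ y|
        ≤ (vnorm x * vnorm y) * (c * vnorm x * vnorm y) := by nlinarith [key]
    exact le_of_mul_le_mul_left key2 hP

lemma sym_opNorm_le [DecidableEq ι] {A : Matrix ι ι ℝ} (hA : Aᵀ = A) {c : ℝ} (hc : 0 ≤ c)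
    (h : ∀ z, |z ⬝ᵥ A *ᵥ z| ≤ c * vnorm z ^ 2) : ‖A‖ ≤ c := by
  apply opNorm_le_of_mulVec A c hc
  intro v
  set w := A *ᵥ v with hw
  have hww : vnorm w ^ 2 = w ⬝ᵥ w := by
    rw [vnorm_sq]; unfold dotProduct; apply Finset.sum_congr rfl; intro i _; ring
  have hb := bilin_bound hA hc h w v
  have hle : w ⬝ᵥ w ≤ c * vnorm w * vnorm v := by
    calc w ⬝ᵥ w = w ⬝ᵥ A *ᵥ v := by rw [← hw]
      _ ≤ |w ⬝ᵥ A *ᵥ v| := le_abs_self _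
      _ ≤ c * vnorm w * vnorm v := hb
  rcases eq_or_lt_of_le (vnorm_nonneg w) with h0 | h0
  · rw [← h0]; exact mul_nonneg hc (vnorm_nonneg v)
  · nlinarith [hww, hle, h0]

lemma quad_le_norm [DecidableEq ι] (A : Matrix ι ι ℝ) (z : ι → ℝ) :
    z ⬝ᵥ A *ᵥ z ≤ ‖A‖ * vnorm z ^ 2 := by
  calc z ⬝ᵥ A *ᵥ z ≤ |z ⬝ᵥ A *ᵥ z| := le_abs_self _
    _ ≤ vnorm z * vnorm (A *ᵥ z) := abs_dotProduct_le _ _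
    _ ≤ vnorm z * (‖A‖ * vnorm z) :=
        mul_le_mul_of_nonneg_left (vnorm_mulVec_le A z) (vnorm_nonneg z)
    _ = ‖A‖ * vnorm z ^ 2 := by ring

/-- The central operator-norm comparison for sandwiched symmetric matrices. -/
lemma step_norm [DecidableEq ι] {D L : Matrix ι ι ℝ} (hD : Dᵀ = D) (hL : Lᵀ = L)
    {ε : ℝ} (hε : 0 ≤ ε) (h : ∀ z, |z ⬝ᵥ D *ᵥ z| ≤ ε * (z ⬝ᵥ L *ᵥ z))
    (M : Matrix ι ι ℝ) (hM : Mᵀ = M) : ‖M * D * M‖ ≤ ε * ‖M * L * M‖ := by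
  have hsym : (M * D * M)ᵀ = M * D * M := by
    rw [Matrix.transpose_mul, Matrix.transpose_mul, hM, hD]
    rw [Matrix.mul_assoc]
  apply sym_opNorm_le hsym (mul_nonneg hε (norm_nonneg _))
  intro z
  have hz : z ⬝ᵥ (M * D * M) *ᵥ z = (M *ᵥ z) ⬝ᵥ D *ᵥ (M *ᵥ z) := by
    rw [← Matrix.mulVec_mulVec, ← Matrix.mulVec_mulVec, dot_self_mulVec hM]
  have hzL : z ⬝ᵥ (M * L * M) *ᵥ z = (M *ᵥ z) ⬝ᵥ L *ᵥ (M *ᵥ z) := by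
    rw [← Matrix.mulVec_mulVec, ← Matrix.mulVec_mulVec, dot_self_mulVec hM]
  rw [hz]
  calc |(M *ᵥ z) ⬝ᵥ D *ᵥ (M *ᵥ z)| ≤ ε * ((M *ᵥ z) ⬝ᵥ L *ᵥ (M *ᵥ z)) := h _
    _ = ε * (z ⬝ᵥ (M * L * M) *ᵥ z) := by rw [hzL]
    _ ≤ ε * (‖M * L * M‖ * vnorm z ^ 2) :=
        mul_le_mul_of_nonneg_left (quad_le_norm _ _) hε
    _ = ε * ‖M * L * M‖ * vnorm z ^ 2 := by ring

lemma herm_transpose {A : Matrix ι ι ℝ} (h : A.IsHermitian) : Aᵀ = A := by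
  ext i j
  conv_rhs => rw [← h]
  simp [Matrix.conjTranspose_apply]

end Basic

section Cast
variable {ι : Type*} [Fintype ι]

lemma castC_add (u v : ι → ℝ) : castC (u + v) = castC u + castC v := by
  funext i; simp [castC]

lemma castC_sub (u v : ι → ℝ) : castC (u - v) = castC u - castC v := by
  funext i; simp [castC]

lemma mulVec_map_ofReal (M : Matrix ι ι ℝ) (v : ι → ℝ) :
    (M.map Complex.ofReal) *ᵥ castC v = castC (M *ᵥ v) := by
  funext i
  simp [castC, Matrix.mulVec, dotProduct, Matrix.map_apply]

lemma complexMulVec (A B : Matrix ι ι ℝ) (x y : ι → ℝ) :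
    (A.map Complex.ofReal + Complex.I • B.map Complex.ofReal) *ᵥ (castC x + Complex.I • castC y)
      = castC (A *ᵥ x - B *ᵥ y) + Complex.I • castC (B *ᵥ x + A *ᵥ y) := by
  rw [Matrix.add_mulVec, Matrix.mulVec_add, Matrix.mulVec_add,
    Matrix.smul_mulVec, Matrix.smul_mulVec,
    Matrix.mulVec_smul, Matrix.mulVec_smul, castC_sub, castC_add,
    mulVec_map_ofReal, mulVec_map_ofReal, mulVec_map_ofReal, mulVec_map_ofReal,
    smul_smul, Complex.I_mul_I, neg_smul, one_smul, smul_add]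
  abel

lemma map_ofReal_sub (M N : Matrix ι ι ℝ) :
    (M - N).map Complex.ofReal = M.map Complex.ofReal - N.map Complex.ofReal := by
  ext i j; simp [Matrix.map_apply]

lemma map_ofReal_neg (M : Matrix ι ι ℝ) :
    (-M).map Complex.ofReal = -(M.map Complex.ofReal) := by
  ext i j; simp [Matrix.map_apply]

lemma conj_map_ofReal (M : Matrix ι ι ℝ) :
    (M.map Complex.ofReal).map (starRingEnd ℂ) = M.map Complex.ofReal := by
  ext i j; simp [Matrix.map_apply, Complex.conj_ofReal]

lemma conj_smul_map (c : ℂ) (N : Matrix ι ι ℂ) :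
    (c • N).map (starRingEnd ℂ) = (starRingEnd ℂ c) • N.map (starRingEnd ℂ) := by
  ext i j; simp [Matrix.map_apply]

lemma conj_sub_map (M N : Matrix ι ι ℂ) :
    (M - N).map (starRingEnd ℂ) = M.map (starRingEnd ℂ) - N.map (starRingEnd ℂ) := by
  ext i j; simp [Matrix.map_apply]

lemma conj_add_map (M N : Matrix ι ι ℂ) :
    (M + N).map (starRingEnd ℂ) = M.map (starRingEnd ℂ) + N.map (starRingEnd ℂ) := by
  ext i j; simp [Matrix.map_apply]

lemma cvnorm_cast_pair (r s : ι → ℝ) :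
    cvnorm (castC r + Complex.I • castC s) = Real.sqrt (vnorm r ^ 2 + vnorm s ^ 2) := by
  unfold cvnorm
  rw [vnorm_sq, vnorm_sq, ← Finset.sum_add_distrib]
  congr 1
  apply Finset.sum_congr rfl; intro i _
  have hentry : (castC r + Complex.I • castC s) i = (r i : ℂ) + Complex.I * (s i : ℂ) := by
    simp [castC]
  rw [hentry]
  rw [Complex.sq_norm, Complex.normSq_apply]
  simp [Complex.add_re, Complex.add_im, Complex.mul_re, Complex.mul_im]
  ring

end Cast

lemma blockDiag_quad {n m : ℕ} (L : Matrix (Fin n) (Fin n) ℝ) (z : Fin n × Fin m → ℝ) :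
    z ⬝ᵥ (blockDiagonal (fun _ : Fin m => L)) *ᵥ z
      = ∑ k : Fin m, (fun i => z (i, k)) ⬝ᵥ L *ᵥ (fun i => z (i, k)) := by
  simp only [dotProduct, mulVec, blockDiagonal_apply, Fintype.sum_prod_type, Finset.mul_sum,
    mul_ite, mul_zero, ite_mul, zero_mul, Finset.sum_ite_eq, Finset.sum_ite_eq',
    Finset.mem_univ, if_true]
  rw [Finset.sum_comm]

lemma sandwich_abs {m : ℕ} {ε : ℝ} (hε : 0 ≤ ε) (q q' : Fin m → ℝ) (hq : ∀ k, 0 ≤ q k)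
    (h1 : ∀ k, (1 / (1 + ε)) * q k ≤ q' k) (h2 : ∀ k, q' k ≤ (1 + ε) * q k) :
    |∑ k, q' k - ∑ k, q k| ≤ ε * ∑ k, q k := by
  have hpos : (0:ℝ) < 1 + ε := by linarith
  have hlow : ∀ k, (1 - ε) * q k ≤ q' k := by
    intro k
    have hdiv : (1 - ε) ≤ 1 / (1 + ε) := by
      rw [le_div_iff₀ hpos]; nlinarith
    calc (1 - ε) * q k ≤ (1 / (1 + ε)) * q k := mul_le_mul_of_nonneg_right hdiv (hq k)
      _ ≤ q' k := h1 k
  rw [abs_le]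
  constructor
  · have hs : ∑ k, (1 - ε) * q k ≤ ∑ k, q' k :=
      Finset.sum_le_sum fun k _ => hlow k
    rw [← Finset.mul_sum] at hs
    have hqs : 0 ≤ ∑ k, q k := Finset.sum_nonneg fun k _ => hq k
    nlinarith [hs]
  · have hs : ∑ k, q' k ≤ ∑ k, (1 + ε) * q k :=
      Finset.sum_le_sum fun k _ => h2 k
    rw [← Finset.mul_sum] at hs
    nlinarith [hs]

end ACAux

/-- Main AC theorem. If the conductance and susceptance Laplacians of an AC
network are ε-approximated, then the fitting error of the sparse network exceeds that of the
original by at most `ε·Δ/√(2mn)`. -/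
theorem ac_sparse_rms_bound
    (n m : ℕ) (hn : 1 ≤ n) (hm : 1 ≤ m) (ε : ℝ) (hε : 0 ≤ ε)
    (Lc Ls Lc' Ls' : Matrix (Fin n) (Fin n) ℝ)
    (hLc : Lc.PosSemidef) (hLs : Ls.PosSemidef) (hLc' : Lc'.PosSemidef) (hLs' : Ls'.PosSemidef)
    (hLc1 : Lc.mulVec (fun _ => 1) = 0) (hLs1 : Ls.mulVec (fun _ => 1) = 0)
    (hLc'1 : Lc'.mulVec (fun _ => 1) = 0) (hLs'1 : Ls'.mulVec (fun _ => 1) = 0)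
    (hsandc : ∀ z : Fin n → ℝ,
      (1 / (1 + ε)) * (z ⬝ᵥ Lc.mulVec z) ≤ z ⬝ᵥ Lc'.mulVec z ∧
      z ⬝ᵥ Lc'.mulVec z ≤ (1 + ε) * (z ⬝ᵥ Lc.mulVec z))
    (hsands : ∀ z : Fin n → ℝ,
      (1 / (1 + ε)) * (z ⬝ᵥ Ls.mulVec z) ≤ z ⬝ᵥ Ls'.mulVec z ∧
      z ⬝ᵥ Ls'.mulVec z ≤ (1 + ε) * (z ⬝ᵥ Ls.mulVec z))
    -- the mn×mn real diagonal matrices ℰ and ℱ, and the complex voltage matrix V = ℰ + iℱ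
    (E F : Fin n × Fin m → ℝ)
    (Emat Fmat : Matrix (Fin n × Fin m) (Fin n × Fin m) ℝ)
    (hE : Emat = diagonal E) (hF : Fmat = diagonal F)
    (V : Matrix (Fin n × Fin m) (Fin n × Fin m) ℂ)
    (hV : V = Emat.map Complex.ofReal + Complex.I • Fmat.map Complex.ofReal)
    -- the block-diagonal matrices 𝓛c, 𝓛s, 𝓛 = 𝓛c − i𝓛s and 𝓛' = 𝓛c' − i𝓛s'
    (𝓛c 𝓛s 𝓛c' 𝓛s' : Matrix (Fin n × Fin m) (Fin n × Fin m) ℝ)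
    (h𝓛c : 𝓛c = blockDiagonal (fun _ => Lc)) (h𝓛s : 𝓛s = blockDiagonal (fun _ => Ls))
    (h𝓛c' : 𝓛c' = blockDiagonal (fun _ => Lc')) (h𝓛s' : 𝓛s' = blockDiagonal (fun _ => Ls'))
    (𝓛 𝓛' : Matrix (Fin n × Fin m) (Fin n × Fin m) ℂ)
    (h𝓛 : 𝓛 = 𝓛c.map Complex.ofReal - Complex.I • 𝓛s.map Complex.ofReal)
    (h𝓛' : 𝓛' = 𝓛c'.map Complex.ofReal - Complex.I • 𝓛s'.map Complex.ofReal)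
    (S : Fin n × Fin m → ℂ)
    (Δ : ℝ)
    (hΔ : Δ = Real.sqrt (
      (Real.sqrt (m * n) * (‖Emat * 𝓛c * Emat‖ + ‖Fmat * 𝓛c * Fmat‖) +
        ‖𝓛s‖ * (‖Emat‖ * vnorm (Fmat.mulVec (fun _ => 1)) +
                 ‖Fmat‖ * vnorm (Emat.mulVec (fun _ => 1)))) ^ 2 +
      (Real.sqrt (m * n) * (‖Emat * 𝓛s * Emat‖ + ‖Fmat * 𝓛s * Fmat‖) +
        ‖𝓛c‖ * (‖Fmat‖ * vnorm (Emat.mulVec (fun _ => 1)) +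
                 ‖Emat‖ * vnorm (Fmat.mulVec (fun _ => 1)))) ^ 2)) :
    (1 / Real.sqrt (2 * m * n)) *
        cvnorm ((V * 𝓛'.map (starRingEnd ℂ) * V.map (starRingEnd ℂ)).mulVec (fun _ => 1) - S) ≤
      (1 / Real.sqrt (2 * m * n)) *
        cvnorm ((V * 𝓛.map (starRingEnd ℂ) * V.map (starRingEnd ℂ)).mulVec (fun _ => 1) - S) +
        ε * Δ / Real.sqrt (2 * m * n) := by
  classical
  open ACAux in
  set one : (Fin n × Fin m) → ℝ := fun _ => 1 with hone_def
  set e : (Fin n × Fin m) → ℝ := Emat *ᵥ one with he_def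
  set f : (Fin n × Fin m) → ℝ := Fmat *ᵥ one with hf_def
  set Dcm : Matrix (Fin n × Fin m) (Fin n × Fin m) ℝ := 𝓛c' - 𝓛c with hDcm_def
  set Dsm : Matrix (Fin n × Fin m) (Fin n × Fin m) ℝ := 𝓛s' - 𝓛s with hDsm_def
  -- symmetry facts
  have h𝓛cT : 𝓛cᵀ = 𝓛c := by
    rw [h𝓛c, Matrix.blockDiagonal_transpose]
    rw [show (fun _ : Fin m => Lcᵀ) = (fun _ : Fin m => Lc) from funext fun _ => ACAux.herm_transpose hLc.1]
  have h𝓛sT : 𝓛sᵀ = 𝓛s := by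
    rw [h𝓛s, Matrix.blockDiagonal_transpose]
    rw [show (fun _ : Fin m => Lsᵀ) = (fun _ : Fin m => Ls) from funext fun _ => ACAux.herm_transpose hLs.1]
  have h𝓛c'T : 𝓛c'ᵀ = 𝓛c' := by
    rw [h𝓛c', Matrix.blockDiagonal_transpose]
    rw [show (fun _ : Fin m => Lc'ᵀ) = (fun _ : Fin m => Lc') from funext fun _ => ACAux.herm_transpose hLc'.1]
  have h𝓛s'T : 𝓛s'ᵀ = 𝓛s' := by
    rw [h𝓛s', Matrix.blockDiagonal_transpose]
    rw [show (fun _ : Fin m => Ls'ᵀ) = (fun _ : Fin m => Ls') from funext fun _ => ACAux.herm_transpose hLs'.1]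
  have hDcmT : Dcmᵀ = Dcm := by rw [hDcm_def, Matrix.transpose_sub, h𝓛c'T, h𝓛cT]
  have hDsmT : Dsmᵀ = Dsm := by rw [hDsm_def, Matrix.transpose_sub, h𝓛s'T, h𝓛sT]
  have hET : Ematᵀ = Emat := by rw [hE, Matrix.diagonal_transpose]
  have hFT : Fmatᵀ = Fmat := by rw [hF, Matrix.diagonal_transpose]
  -- quadratic-form sandwich at the big level
  have hqc : ∀ z : (Fin n × Fin m) → ℝ, |z ⬝ᵥ Dcm *ᵥ z| ≤ ε * (z ⬝ᵥ 𝓛c *ᵥ z) := by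
    intro z
    have hsub : z ⬝ᵥ Dcm *ᵥ z = z ⬝ᵥ 𝓛c' *ᵥ z - z ⬝ᵥ 𝓛c *ᵥ z := by
      rw [hDcm_def, Matrix.sub_mulVec, dotProduct_sub]
    rw [hsub, h𝓛c, h𝓛c', ACAux.blockDiag_quad, ACAux.blockDiag_quad]
    exact ACAux.sandwich_abs hε _ _
      (fun k => by simpa using hLc.dotProduct_mulVec_nonneg (fun i => z (i, k)))
      (fun k => (hsandc _).1) (fun k => (hsandc _).2)
  have hqs : ∀ z : (Fin n × Fin m) → ℝ, |z ⬝ᵥ Dsm *ᵥ z| ≤ ε * (z ⬝ᵥ 𝓛s *ᵥ z) := by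
    intro z
    have hsub : z ⬝ᵥ Dsm *ᵥ z = z ⬝ᵥ 𝓛s' *ᵥ z - z ⬝ᵥ 𝓛s *ᵥ z := by
      rw [hDsm_def, Matrix.sub_mulVec, dotProduct_sub]
    rw [hsub, h𝓛s, h𝓛s', ACAux.blockDiag_quad, ACAux.blockDiag_quad]
    exact ACAux.sandwich_abs hε _ _
      (fun k => by simpa using hLs.dotProduct_mulVec_nonneg (fun i => z (i, k)))
      (fun k => (hsands _).1) (fun k => (hsands _).2)
  -- operator norm bounds
  have hDcn : ‖Dcm‖ ≤ ε * ‖𝓛c‖ := by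
    have h := ACAux.step_norm hDcmT h𝓛cT hε hqc 1 Matrix.transpose_one
    simpa [Matrix.one_mul, Matrix.mul_one] using h
  have hDsn : ‖Dsm‖ ≤ ε * ‖𝓛s‖ := by
    have h := ACAux.step_norm hDsmT h𝓛sT hε hqs 1 Matrix.transpose_one
    simpa [Matrix.one_mul, Matrix.mul_one] using h
  have hEDcE : ‖Emat * Dcm * Emat‖ ≤ ε * ‖Emat * 𝓛c * Emat‖ :=
    ACAux.step_norm hDcmT h𝓛cT hε hqc Emat hET
  have hFDcF : ‖Fmat * Dcm * Fmat‖ ≤ ε * ‖Fmat * 𝓛c * Fmat‖ :=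
    ACAux.step_norm hDcmT h𝓛cT hε hqc Fmat hFT
  have hEDsE : ‖Emat * Dsm * Emat‖ ≤ ε * ‖Emat * 𝓛s * Emat‖ :=
    ACAux.step_norm hDsmT h𝓛sT hε hqs Emat hET
  have hFDsF : ‖Fmat * Dsm * Fmat‖ ≤ ε * ‖Fmat * 𝓛s * Fmat‖ :=
    ACAux.step_norm hDsmT h𝓛sT hε hqs Fmat hFT
  -- norm of the all-ones vector
  have hone : vnorm one = Real.sqrt (m * n) := by
    unfold vnorm
    congr 1
    simp [hone_def, Finset.card_univ]
    push_cast; ring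
  -- the complex difference vector
  set x : (Fin n × Fin m) → ℝ := Dcm *ᵥ e + Dsm *ᵥ f with hx_def
  set y : (Fin n × Fin m) → ℝ := Dsm *ᵥ e - Dcm *ᵥ f with hy_def
  set r : (Fin n × Fin m) → ℝ := Emat *ᵥ x - Fmat *ᵥ y with hr_def
  set s : (Fin n × Fin m) → ℝ := Fmat *ᵥ x + Emat *ᵥ y with hs_def
  have hVconj : V.map (starRingEnd ℂ)
      = Emat.map Complex.ofReal + Complex.I • ((-Fmat).map Complex.ofReal) := by
    rw [hV, ACAux.conj_add_map, ACAux.conj_map_ofReal, ACAux.conj_smul_map,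
      ACAux.conj_map_ofReal, Complex.conj_I, ACAux.map_ofReal_neg]
    rw [neg_smul, smul_neg]
  have h𝓛diff : 𝓛'.map (starRingEnd ℂ) - 𝓛.map (starRingEnd ℂ)
      = Dcm.map Complex.ofReal + Complex.I • Dsm.map Complex.ofReal := by
    rw [h𝓛, h𝓛', ACAux.conj_sub_map, ACAux.conj_sub_map, ACAux.conj_map_ofReal,
      ACAux.conj_map_ofReal, ACAux.conj_smul_map, ACAux.conj_smul_map,
      ACAux.conj_map_ofReal, ACAux.conj_map_ofReal, Complex.conj_I,
      hDcm_def, hDsm_def, ACAux.map_ofReal_sub, ACAux.map_ofReal_sub, smul_sub]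
    simp only [neg_smul]
    abel
  have h1C : (fun _ => (1:ℂ)) = ACAux.castC one + Complex.I • ACAux.castC (0 : (Fin n × Fin m) → ℝ) := by
    funext i; simp [ACAux.castC, hone_def]
  have hw : V.map (starRingEnd ℂ) *ᵥ (fun _ => (1:ℂ))
      = ACAux.castC e + Complex.I • ACAux.castC (-f) := by
    rw [h1C, hVconj, ACAux.complexMulVec]
    rw [Matrix.mulVec_zero, Matrix.mulVec_zero, Matrix.neg_mulVec]
    rw [sub_zero, add_zero, ← he_def, ← hf_def]
  have hu : (Dcm.map Complex.ofReal + Complex.I • Dsm.map Complex.ofReal) *ᵥ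
        (ACAux.castC e + Complex.I • ACAux.castC (-f))
      = ACAux.castC x + Complex.I • ACAux.castC y := by
    have h := ACAux.complexMulVec Dcm Dsm e (-f)
    rw [h]
    congr 1
    · congr 1; rw [hx_def, Matrix.mulVec_neg]; abel
    · congr 1; rw [hy_def, Matrix.mulVec_neg]; abel
  have hexpand : ∀ (L : Matrix (Fin n × Fin m) (Fin n × Fin m) ℂ),
      (V * L * V.map (starRingEnd ℂ)) *ᵥ (fun _ => (1:ℂ))
        = V *ᵥ (L *ᵥ (V.map (starRingEnd ℂ) *ᵥ (fun _ => (1:ℂ)))) := by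
    intro L
    rw [Matrix.mulVec_mulVec, Matrix.mulVec_mulVec, Matrix.mul_assoc]
  have hd : (V * 𝓛'.map (starRingEnd ℂ) * V.map (starRingEnd ℂ)) *ᵥ (fun _ => (1:ℂ))
        - (V * 𝓛.map (starRingEnd ℂ) * V.map (starRingEnd ℂ)) *ᵥ (fun _ => (1:ℂ))
      = ACAux.castC r + Complex.I • ACAux.castC s := by
    rw [hexpand, hexpand, ← Matrix.mulVec_sub, ← Matrix.sub_mulVec, h𝓛diff, hw, hu, hV,
      ACAux.complexMulVec, ← hr_def, ← hs_def]
  -- bounds on vnorm r and vnorm s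
  have sqrtmn_nonneg : (0:ℝ) ≤ Real.sqrt (m * n) := Real.sqrt_nonneg _
  have t1 : vnorm (Emat *ᵥ (Dcm *ᵥ e)) ≤ ε * ‖Emat * 𝓛c * Emat‖ * Real.sqrt (m * n) := by
    have heq : Emat *ᵥ (Dcm *ᵥ e) = (Emat * Dcm * Emat) *ᵥ one := by
      rw [he_def, Matrix.mulVec_mulVec, Matrix.mulVec_mulVec, Matrix.mul_assoc]
    rw [heq, ← hone]
    calc vnorm ((Emat * Dcm * Emat) *ᵥ one) ≤ ‖Emat * Dcm * Emat‖ * vnorm one :=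
          ACAux.vnorm_mulVec_le _ _
      _ ≤ ε * ‖Emat * 𝓛c * Emat‖ * vnorm one :=
          mul_le_mul_of_nonneg_right hEDcE (ACAux.vnorm_nonneg _)
  have t4 : vnorm (Fmat *ᵥ (Dcm *ᵥ f)) ≤ ε * ‖Fmat * 𝓛c * Fmat‖ * Real.sqrt (m * n) := by
    have heq : Fmat *ᵥ (Dcm *ᵥ f) = (Fmat * Dcm * Fmat) *ᵥ one := by
      rw [hf_def, Matrix.mulVec_mulVec, Matrix.mulVec_mulVec, Matrix.mul_assoc]
    rw [heq, ← hone]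
    calc vnorm ((Fmat * Dcm * Fmat) *ᵥ one) ≤ ‖Fmat * Dcm * Fmat‖ * vnorm one :=
          ACAux.vnorm_mulVec_le _ _
      _ ≤ ε * ‖Fmat * 𝓛c * Fmat‖ * vnorm one :=
          mul_le_mul_of_nonneg_right hFDcF (ACAux.vnorm_nonneg _)
  have t5 : vnorm (Emat *ᵥ (Dsm *ᵥ e)) ≤ ε * ‖Emat * 𝓛s * Emat‖ * Real.sqrt (m * n) := by
    have heq : Emat *ᵥ (Dsm *ᵥ e) = (Emat * Dsm * Emat) *ᵥ one := by
      rw [he_def, Matrix.mulVec_mulVec, Matrix.mulVec_mulVec, Matrix.mul_assoc]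
    rw [heq, ← hone]
    calc vnorm ((Emat * Dsm * Emat) *ᵥ one) ≤ ‖Emat * Dsm * Emat‖ * vnorm one :=
          ACAux.vnorm_mulVec_le _ _
      _ ≤ ε * ‖Emat * 𝓛s * Emat‖ * vnorm one :=
          mul_le_mul_of_nonneg_right hEDsE (ACAux.vnorm_nonneg _)
  have t6 : vnorm (Fmat *ᵥ (Dsm *ᵥ f)) ≤ ε * ‖Fmat * 𝓛s * Fmat‖ * Real.sqrt (m * n) := by
    have heq : Fmat *ᵥ (Dsm *ᵥ f) = (Fmat * Dsm * Fmat) *ᵥ one := by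
      rw [hf_def, Matrix.mulVec_mulVec, Matrix.mulVec_mulVec, Matrix.mul_assoc]
    rw [heq, ← hone]
    calc vnorm ((Fmat * Dsm * Fmat) *ᵥ one) ≤ ‖Fmat * Dsm * Fmat‖ * vnorm one :=
          ACAux.vnorm_mulVec_le _ _
      _ ≤ ε * ‖Fmat * 𝓛s * Fmat‖ * vnorm one :=
          mul_le_mul_of_nonneg_right hFDsF (ACAux.vnorm_nonneg _)
  have mixed : ∀ (M : Matrix (Fin n × Fin m) (Fin n × Fin m) ℝ) (D : Matrix (Fin n × Fin m) (Fin n × Fin m) ℝ) (cD : ℝ) (hcD : ‖D‖ ≤ cD)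
      (v : (Fin n × Fin m) → ℝ), vnorm (M *ᵥ (D *ᵥ v)) ≤ ‖M‖ * (cD * vnorm v) := by
    intro M D cD hcD v
    calc vnorm (M *ᵥ (D *ᵥ v)) ≤ ‖M‖ * vnorm (D *ᵥ v) := ACAux.vnorm_mulVec_le _ _
      _ ≤ ‖M‖ * (cD * vnorm v) := by
          apply mul_le_mul_of_nonneg_left _ (norm_nonneg M)
          calc vnorm (D *ᵥ v) ≤ ‖D‖ * vnorm v := ACAux.vnorm_mulVec_le _ _
            _ ≤ cD * vnorm v := mul_le_mul_of_nonneg_right hcD (ACAux.vnorm_nonneg _)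
  have t2 : vnorm (Emat *ᵥ (Dsm *ᵥ f)) ≤ ‖Emat‖ * (ε * ‖𝓛s‖ * vnorm f) :=
    mixed Emat Dsm (ε * ‖𝓛s‖) hDsn f
  have t3 : vnorm (Fmat *ᵥ (Dsm *ᵥ e)) ≤ ‖Fmat‖ * (ε * ‖𝓛s‖ * vnorm e) :=
    mixed Fmat Dsm (ε * ‖𝓛s‖) hDsn e
  have t7 : vnorm (Fmat *ᵥ (Dcm *ᵥ e)) ≤ ‖Fmat‖ * (ε * ‖𝓛c‖ * vnorm e) :=
    mixed Fmat Dcm (ε * ‖𝓛c‖) hDcn e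
  have t8 : vnorm (Emat *ᵥ (Dcm *ᵥ f)) ≤ ‖Emat‖ * (ε * ‖𝓛c‖ * vnorm f) :=
    mixed Emat Dcm (ε * ‖𝓛c‖) hDcn f
  set a : ℝ := Real.sqrt (m * n) * (‖Emat * 𝓛c * Emat‖ + ‖Fmat * 𝓛c * Fmat‖) +
      ‖𝓛s‖ * (‖Emat‖ * vnorm f + ‖Fmat‖ * vnorm e) with ha_def
  set b : ℝ := Real.sqrt (m * n) * (‖Emat * 𝓛s * Emat‖ + ‖Fmat * 𝓛s * Fmat‖) +
      ‖𝓛c‖ * (‖Fmat‖ * vnorm e + ‖Emat‖ * vnorm f) with hb_def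
  have ha_nonneg : 0 ≤ a := by
    apply add_nonneg
    · exact mul_nonneg sqrtmn_nonneg (add_nonneg (norm_nonneg _) (norm_nonneg _))
    · exact mul_nonneg (norm_nonneg _) (add_nonneg
        (mul_nonneg (norm_nonneg _) (ACAux.vnorm_nonneg _))
        (mul_nonneg (norm_nonneg _) (ACAux.vnorm_nonneg _)))
  have hb_nonneg : 0 ≤ b := by
    apply add_nonneg
    · exact mul_nonneg sqrtmn_nonneg (add_nonneg (norm_nonneg _) (norm_nonneg _))
    · exact mul_nonneg (norm_nonneg _) (add_nonneg
        (mul_nonneg (norm_nonneg _) (ACAux.vnorm_nonneg _))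
        (mul_nonneg (norm_nonneg _) (ACAux.vnorm_nonneg _)))
  have hrbound : vnorm r ≤ ε * a := by
    have h1 : r = (Emat *ᵥ (Dcm *ᵥ e) + Emat *ᵥ (Dsm *ᵥ f))
        - (Fmat *ᵥ (Dsm *ᵥ e) - Fmat *ᵥ (Dcm *ᵥ f)) := by
      rw [hr_def, hx_def, hy_def, Matrix.mulVec_add, Matrix.mulVec_sub]
    calc vnorm r ≤ vnorm (Emat *ᵥ (Dcm *ᵥ e) + Emat *ᵥ (Dsm *ᵥ f))
          + vnorm (Fmat *ᵥ (Dsm *ᵥ e) - Fmat *ᵥ (Dcm *ᵥ f)) := by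
            rw [h1]; exact ACAux.vnorm_sub_le _ _
      _ ≤ (vnorm (Emat *ᵥ (Dcm *ᵥ e)) + vnorm (Emat *ᵥ (Dsm *ᵥ f)))
          + (vnorm (Fmat *ᵥ (Dsm *ᵥ e)) + vnorm (Fmat *ᵥ (Dcm *ᵥ f))) :=
            add_le_add (ACAux.vnorm_add_le _ _) (ACAux.vnorm_sub_le _ _)
      _ ≤ (ε * ‖Emat * 𝓛c * Emat‖ * Real.sqrt (m * n) + ‖Emat‖ * (ε * ‖𝓛s‖ * vnorm f))
          + (‖Fmat‖ * (ε * ‖𝓛s‖ * vnorm e) + ε * ‖Fmat * 𝓛c * Fmat‖ * Real.sqrt (m * n)) :=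
            add_le_add (add_le_add t1 t2) (add_le_add t3 t4)
      _ = ε * a := by rw [ha_def]; ring
  have hsbound : vnorm s ≤ ε * b := by
    have h1 : s = (Fmat *ᵥ (Dcm *ᵥ e) + Fmat *ᵥ (Dsm *ᵥ f))
        + (Emat *ᵥ (Dsm *ᵥ e) - Emat *ᵥ (Dcm *ᵥ f)) := by
      rw [hs_def, hx_def, hy_def, Matrix.mulVec_add, Matrix.mulVec_sub]
    calc vnorm s ≤ vnorm (Fmat *ᵥ (Dcm *ᵥ e) + Fmat *ᵥ (Dsm *ᵥ f))
          + vnorm (Emat *ᵥ (Dsm *ᵥ e) - Emat *ᵥ (Dcm *ᵥ f)) := by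
            rw [h1]; exact ACAux.vnorm_add_le _ _
      _ ≤ (vnorm (Fmat *ᵥ (Dcm *ᵥ e)) + vnorm (Fmat *ᵥ (Dsm *ᵥ f)))
          + (vnorm (Emat *ᵥ (Dsm *ᵥ e)) + vnorm (Emat *ᵥ (Dcm *ᵥ f))) :=
            add_le_add (ACAux.vnorm_add_le _ _) (ACAux.vnorm_sub_le _ _)
      _ ≤ (‖Fmat‖ * (ε * ‖𝓛c‖ * vnorm e) + ε * ‖Fmat * 𝓛s * Fmat‖ * Real.sqrt (m * n))
          + (ε * ‖Emat * 𝓛s * Emat‖ * Real.sqrt (m * n) + ‖Emat‖ * (ε * ‖𝓛c‖ * vnorm f)) :=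
            add_le_add (add_le_add t7 t6) (add_le_add t5 t8)
      _ = ε * b := by rw [hb_def]; ring
  -- the difference has norm at most ε·Δ
  have hdnorm : cvnorm ((V * 𝓛'.map (starRingEnd ℂ) * V.map (starRingEnd ℂ)) *ᵥ (fun _ => (1:ℂ))
        - (V * 𝓛.map (starRingEnd ℂ) * V.map (starRingEnd ℂ)) *ᵥ (fun _ => (1:ℂ)))
      ≤ ε * Δ := by
    rw [hd, ACAux.cvnorm_cast_pair]
    have h1 : vnorm r ^ 2 + vnorm s ^ 2 ≤ (ε * a) ^ 2 + (ε * b) ^ 2 :=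
      add_le_add (pow_le_pow_left₀ (ACAux.vnorm_nonneg _) hrbound 2)
        (pow_le_pow_left₀ (ACAux.vnorm_nonneg _) hsbound 2)
    calc Real.sqrt (vnorm r ^ 2 + vnorm s ^ 2) ≤ Real.sqrt ((ε * a) ^ 2 + (ε * b) ^ 2) :=
          Real.sqrt_le_sqrt h1
      _ = Real.sqrt (ε ^ 2 * (a ^ 2 + b ^ 2)) := by ring_nf
      _ = ε * Real.sqrt (a ^ 2 + b ^ 2) := by
          rw [Real.sqrt_mul (sq_nonneg ε), Real.sqrt_sq hε]
      _ = ε * Δ := by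
          rw [hΔ, ha_def, hb_def, he_def, hf_def]
  -- triangle inequality and conclusion
  set bv : (Fin n × Fin m) → ℂ := (V * 𝓛.map (starRingEnd ℂ) * V.map (starRingEnd ℂ)) *ᵥ (fun _ => (1:ℂ))
    with hbv_def
  set bv' : (Fin n × Fin m) → ℂ := (V * 𝓛'.map (starRingEnd ℂ) * V.map (starRingEnd ℂ)) *ᵥ (fun _ => (1:ℂ))
    with hbv'_def
  have htri : cvnorm (bv' - S) ≤ cvnorm (bv - S) + ε * Δ := by
    have hsplit : bv' - S = (bv - S) + (bv' - bv) := by abel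
    calc cvnorm (bv' - S) = cvnorm ((bv - S) + (bv' - bv)) := by rw [← hsplit]
      _ ≤ cvnorm (bv - S) + cvnorm (bv' - bv) := ACAux.cvnorm_add_le _ _
      _ ≤ cvnorm (bv - S) + ε * Δ := by
          exact add_le_add_right hdnorm _
  have hs_nonneg : (0:ℝ) ≤ 1 / Real.sqrt (2 * m * n) := by positivity
  calc (1 / Real.sqrt (2 * m * n)) * cvnorm (bv' - S)
      ≤ (1 / Real.sqrt (2 * m * n)) * (cvnorm (bv - S) + ε * Δ) :=
        mul_le_mul_of_nonneg_left htri hs_nonneg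
    _ = (1 / Real.sqrt (2 * m * n)) * cvnorm (bv - S) + ε * Δ / Real.sqrt (2 * m * n) := by
        ring
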